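/- Let q : [0,1] → ℝ be continuous, let c > 0 and ℓ, ε, λ ∈ ℝ, and let u : [0,1] → ℝ be twice continuously differentiable with −(1/c)·u″(t) + ε·q(t)·u(t) + (2ℓ − c)·u(t) = λ·u(t) for all t ∈ [0,1]. Define y(t) := C_{c−ℓ}(t)·(u(t), u′(t)/c)ᵀ and R(t) := C_{c−ℓ}(t)·T·C_{c−ℓ}(t)ᵀ. Then y satisfies J·y′(t) + ε·q(t)·R(t)·y(t) + ℓ·(2R(t) − I)·y(t) = λ·R(t)·y(t) for all t ∈ [0,1]. -/

import Mathlib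

open Set Matrix

/-- The matrix `J = [[0,-1],[1,0]]` over `ℝ`. -/
noncomputable def Jr : Matrix (Fin 2) (Fin 2) ℝ := !![0, -1; 1, 0]

/-- The rotation matrix `C_c(t)` with rows `(cos(ct), −sin(ct))`, `(sin(ct), cos(ct))`. -/
noncomputable def Cmat (c t : ℝ) : Matrix (Fin 2) (Fin 2) ℝ :=
  !![Real.cos (c * t), -Real.sin (c * t); Real.sin (c * t), Real.cos (c * t)]

/-- The matrix `T = diag(1,0)`. -/
noncomputable def Tmat : Matrix (Fin 2) (Fin 2) ℝ := !![1, 0; 0, 0]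

/-- The matrix `R_c(t) := C_c(t) T C_c(t)ᵀ`. -/
noncomputable def Rmat (c t : ℝ) : Matrix (Fin 2) (Fin 2) ℝ :=
  Cmat c t * Tmat * (Cmat c t)ᵀ

/-- **Lift and unrotation of the recentred Schrödinger eigen-equation.**
If `u` is `C²` and solves `−(1/c) u″ + ε q u + (2ℓ − c) u = λ u` on `[0,1]`, then
`y(t) := C_{c−ℓ}(t) (u(t), u′(t)/c)ᵀ` solves the Dirac-type system
`J y′ + ε q R y + ℓ (2R − I) y = λ R y`, where `R(t) := C_{c−ℓ}(t) T C_{c−ℓ}(t)ᵀ`. -/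
theorem schrodinger_unrotated_system
    (q : ℝ → ℝ) (hq : Continuous q) (c : ℝ) (hc : 0 < c) (ℓ ε lam : ℝ)
    (u : ℝ → ℝ) (hu : ContDiff ℝ 2 u)
    (heq : ∀ t ∈ Icc (0:ℝ) 1,
      -(1 / c) * deriv (deriv u) t + ε * q t * u t + (2 * ℓ - c) * u t = lam * u t) :
    ∀ t ∈ Icc (0:ℝ) 1,
      Jr *ᵥ deriv (fun s => Cmat (c - ℓ) s *ᵥ ![u s, deriv u s / c]) t
        + (ε * q t) • (Rmat (c - ℓ) t *ᵥ (Cmat (c - ℓ) t *ᵥ ![u t, deriv u t / c]))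
        + ℓ • (((2 : ℝ) • Rmat (c - ℓ) t - 1) *ᵥ
            (Cmat (c - ℓ) t *ᵥ ![u t, deriv u t / c]))
      = lam • (Rmat (c - ℓ) t *ᵥ (Cmat (c - ℓ) t *ᵥ ![u t, deriv u t / c])) := by
  intro t ht
  set a := c - ℓ with ha
  -- differentiability of u and deriv u
  have h2 := contDiff_succ_iff_deriv.mp (show ContDiff ℝ (1 + 1) u by exact_mod_cast hu)
  have hu1 : HasDerivAt u (deriv u t) t := (h2.1 t).hasDerivAt
  have hu2 : HasDerivAt (deriv u) (deriv (deriv u) t) t :=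
    ((h2.2.2.differentiable one_ne_zero) t).hasDerivAt
  have hlin : HasDerivAt (fun s : ℝ => a * s) a t := by
    simpa using (hasDerivAt_id t).const_mul a
  have hcos : HasDerivAt (fun s : ℝ => Real.cos (a * s)) (-Real.sin (a * t) * a) t :=
    (Real.hasDerivAt_cos (a * t)).comp t hlin
  have hsin : HasDerivAt (fun s : ℝ => Real.sin (a * s)) (Real.cos (a * t) * a) t :=
    (Real.hasDerivAt_sin (a * t)).comp t hlin
  have hV : HasDerivAt (fun s : ℝ => deriv u s / c) (deriv (deriv u) t / c) t :=
    hu2.div_const c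
  have hg : (fun s => Cmat a s *ᵥ ![u s, deriv u s / c])
      = fun s => ![Real.cos (a * s) * u s - Real.sin (a * s) * (deriv u s / c),
                   Real.sin (a * s) * u s + Real.cos (a * s) * (deriv u s / c)] := by
    funext s
    ext i
    fin_cases i <;>
      simp [Cmat, Matrix.mulVec, dotProduct, Fin.sum_univ_two] <;> ring
  have hd0 : HasDerivAt
      (fun s => Real.cos (a * s) * u s - Real.sin (a * s) * (deriv u s / c))
      ((-Real.sin (a * t) * a) * u t + Real.cos (a * t) * deriv u t
        - (Real.cos (a * t) * a * (deriv u t / c)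
           + Real.sin (a * t) * (deriv (deriv u) t / c))) t :=
    (hcos.mul hu1).sub (hsin.mul hV)
  have hd1 : HasDerivAt
      (fun s => Real.sin (a * s) * u s + Real.cos (a * s) * (deriv u s / c))
      ((Real.cos (a * t) * a) * u t + Real.sin (a * t) * deriv u t
        + ((-Real.sin (a * t) * a) * (deriv u t / c)
           + Real.cos (a * t) * (deriv (deriv u) t / c))) t :=
    (hsin.mul hu1).add (hcos.mul hV)
  have hder : deriv (fun s => Cmat a s *ᵥ ![u s, deriv u s / c]) t
      = ![(-Real.sin (a * t) * a) * u t + Real.cos (a * t) * deriv u t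
            - (Real.cos (a * t) * a * (deriv u t / c)
               + Real.sin (a * t) * (deriv (deriv u) t / c)),
          (Real.cos (a * t) * a) * u t + Real.sin (a * t) * deriv u t
            + ((-Real.sin (a * t) * a) * (deriv u t / c)
               + Real.cos (a * t) * (deriv (deriv u) t / c))] := by
    rw [hg]
    apply HasDerivAt.deriv
    rw [hasDerivAt_pi]
    intro i
    fin_cases i
    · simpa using hd0
    · simpa using hd1
  have hE := heq t ht
  have hW : deriv (deriv u) t = c * (ε * q t * u t + (2 * ℓ - c) * u t - lam * u t) := by
    have hc' : c ≠ 0 := ne_of_gt hc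
    field_simp at hE ⊢
    linarith
  have hc' : c ≠ 0 := ne_of_gt hc
  have hWc : deriv (deriv u) t / c = ε * q t * u t + (2 * ℓ - c) * u t - lam * u t := by
    rw [hW]; field_simp
  have hUp : deriv u t = c * (deriv u t / c) := by field_simp
  have hpy := Real.sin_sq_add_cos_sq (a * t)
  have hy : Cmat a t *ᵥ ![u t, deriv u t / c]
      = ![Real.cos (a * t) * u t - Real.sin (a * t) * (deriv u t / c),
          Real.sin (a * t) * u t + Real.cos (a * t) * (deriv u t / c)] := congrFun hg t
  have hCt : (Cmat a t)ᵀ = !![Real.cos (a*t), Real.sin (a*t);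
      -Real.sin (a*t), Real.cos (a*t)] := by
    ext i j
    fin_cases i <;> fin_cases j <;> simp [Cmat, Matrix.transpose_apply]
  have hR : Rmat a t = !![Real.cos (a*t)^2, Real.cos (a*t) * Real.sin (a*t);
      Real.cos (a*t) * Real.sin (a*t), Real.sin (a*t)^2] := by
    rw [Rmat, hCt]
    ext i j
    fin_cases i <;> fin_cases j <;>
      simp [Cmat, Tmat, Matrix.mul_apply, Fin.sum_univ_two] <;> ring
  have hmv : ∀ p q' r s x y : ℝ, (!![p, q'; r, s] : Matrix (Fin 2) (Fin 2) ℝ) *ᵥ ![x, y]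
      = ![p * x + q' * y, r * x + s * y] := by
    intro p q' r s x y
    ext i
    fin_cases i <;> simp [Matrix.mulVec, dotProduct, Fin.sum_univ_two]
  have h2R : ((2:ℝ) • (!![Real.cos (a*t)^2, Real.cos (a*t) * Real.sin (a*t);
        Real.cos (a*t) * Real.sin (a*t), Real.sin (a*t)^2] : Matrix (Fin 2) (Fin 2) ℝ) - 1)
      = !![2 * Real.cos (a*t)^2 - 1, 2 * (Real.cos (a*t) * Real.sin (a*t));
           2 * (Real.cos (a*t) * Real.sin (a*t)), 2 * Real.sin (a*t)^2 - 1] := by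
    ext i j
    fin_cases i <;> fin_cases j <;>
      simp [Matrix.sub_apply, Matrix.smul_apply, Matrix.one_apply, smul_eq_mul]
  have hsm : ∀ k x y : ℝ, k • (![x, y] : Fin 2 → ℝ) = ![k * x, k * y] := by
    intro k x y
    ext i
    fin_cases i <;> simp
  rw [hder, hy, hR, h2R, show Jr = !![(0:ℝ), -1; 1, 0] from rfl, ]
  simp only [hmv, hsm]
  ext i
  fin_cases i <;> simp [Pi.add_apply] <;> rw [hWc]
  · linear_combination (Real.cos (a*t) * u t * (ε * q t + 2*ℓ - lam)) * hpy
      + (- Real.sin (a*t)) * hUp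
      + (Real.sin (a*t) * (deriv u t / c) - Real.cos (a*t) * u t) * ha
  · linear_combination (Real.sin (a*t) * u t * (ε * q t + 2*ℓ - lam)) * hpy
      + (Real.cos (a*t)) * hUp
      + (-(Real.sin (a*t) * u t) - Real.cos (a*t) * (deriv u t / c)) * ha
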